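/- arXiv:2505.22325 — 6 statements merged into one kernel-verified Lean document; each statement's English description precedes it below -/
import Mathlib

section
/- Let p ∈ [1,∞] with conjugate exponent p'. For every signal f : V → X, the graph Fourier transform satisfies ‖f̂‖_∞ ≤ κ_{p'}(U)·‖f‖_p and ‖f‖_∞ ≤ κ_{p'}(U*)·‖f̂‖_p. Moreover, if X is nontrivial, the first bound is sharp: the operator norm of 𝓕 : L^p(V,X) → L^∞(V,X) equals κ_{p'}(U), i.e., sup over nonzero f of ‖f̂‖_∞/‖f‖_p equals κ_{p'}(U). -/
open Finset
open scoped ENNReal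

/-- The `L^p` norm of a signal `f : Fin N → E` (sup-norm when `p = ∞`). -/
noncomputable def gsNorm {E : Type*} [NormedAddCommGroup E] {N : ℕ} (p : ℝ≥0∞)
    (f : Fin N → E) : ℝ :=
  if p = ∞ then ⨆ n, ‖f n‖ else (∑ n, ‖f n‖ ^ p.toReal) ^ (1 / p.toReal)

/-- `u k` is the `k`-th column of a unitary matrix, i.e. the family of columns is
orthonormal for the standard inner product on `𝕂^N` (hence an orthonormal basis). -/
def OrthoBasis {𝕂 : Type*} [RCLike 𝕂] {N : ℕ} (u : Fin N → Fin N → 𝕂) : Prop :=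
  ∀ k l : Fin N, ∑ n, (starRingEnd 𝕂) (u k n) * u l n = if k = l then (1 : 𝕂) else 0

/-- Graph Fourier transform: `f̂ k = ∑ n, conj (u k n) • f n`. -/
noncomputable def gft {𝕂 : Type*} [RCLike 𝕂] {X : Type*} [NormedAddCommGroup X]
    [NormedSpace 𝕂 X] {N : ℕ} (u : Fin N → Fin N → 𝕂) (f : Fin N → X) : Fin N → X :=
  fun k => ∑ n, (starRingEnd 𝕂) (u k n) • f n

/-- `p`-coherence `κ_p(U)`: the maximum of the `ℓ^p` norms of the columns of `U`. -/
noncomputable def coh {𝕂 : Type*} [RCLike 𝕂] {N : ℕ} (p : ℝ≥0∞)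
    (u : Fin N → Fin N → 𝕂) : ℝ :=
  ⨆ k, gsNorm p (u k)

/-- Mixed norm `‖U‖_{p,q}`: the `ℓ^q` norm of the vector of `ℓ^p` norms of the columns. -/
noncomputable def mixNorm {𝕂 : Type*} [RCLike 𝕂] {N : ℕ} (p q : ℝ≥0∞)
    (u : Fin N → Fin N → 𝕂) : ℝ :=
  gsNorm q (fun k => gsNorm p (u k))

/-- Graph convolution of a scalar signal `α` with a signal `f`:
`(α*f)(n) = ∑ k, u k n • (α̂ k • f̂ k)`. -/
noncomputable def gconv {𝕂 : Type*} [RCLike 𝕂] {X : Type*} [NormedAddCommGroup X]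
    [NormedSpace 𝕂 X] {N : ℕ} (u : Fin N → Fin N → 𝕂) (α : Fin N → 𝕂)
    (f : Fin N → X) : Fin N → X :=
  fun n => ∑ k, u k n • (gft u α k • gft u f k)

/-- Graph translation operator `T_m f (n) = ∑ k, (u k n * conj (u k m)) • f̂ k`. -/
noncomputable def gtrans {𝕂 : Type*} [RCLike 𝕂] {X : Type*} [NormedAddCommGroup X]
    [NormedSpace 𝕂 X] {N : ℕ} (u : Fin N → Fin N → 𝕂) (m : Fin N)
    (f : Fin N → X) : Fin N → X :=
  fun n => ∑ k, (u k n * (starRingEnd 𝕂) (u k m)) • gft u f k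

section Helpers

variable {E : Type*} [NormedAddCommGroup E] {N : ℕ}

lemma gsNorm_top_def (f : Fin N → E) : gsNorm ∞ f = ⨆ n, ‖f n‖ := if_pos rfl

lemma gsNorm_ne_top {p : ℝ≥0∞} (hp : p ≠ ∞) (f : Fin N → E) :
    gsNorm p f = (∑ n, ‖f n‖ ^ p.toReal) ^ (1 / p.toReal) := if_neg hp

lemma gsNorm_nonneg (p : ℝ≥0∞) (f : Fin N → E) : 0 ≤ gsNorm p f := by
  by_cases hp : p = ∞
  · subst hp; rw [gsNorm_top_def]; exact Real.iSup_nonneg fun n => norm_nonneg _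
  · rw [gsNorm_ne_top hp]
    exact Real.rpow_nonneg (Finset.sum_nonneg fun n _ => Real.rpow_nonneg (norm_nonneg _) _) _

lemma le_gsNorm_top (f : Fin N → E) (n : Fin N) : ‖f n‖ ≤ gsNorm ∞ f := by
  rw [gsNorm_top_def]
  exact le_ciSup (f := fun n => ‖f n‖) (Set.finite_range _).bddAbove n

lemma gsNorm_top_le (hN : 0 < N) {f : Fin N → E} {c : ℝ} (hc : ∀ n, ‖f n‖ ≤ c) :
    gsNorm ∞ f ≤ c := by
  haveI : Nonempty (Fin N) := ⟨⟨0, hN⟩⟩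
  rw [gsNorm_top_def]
  exact ciSup_le hc

lemma gsNorm_norm (p : ℝ≥0∞) (f : Fin N → E) :
    gsNorm p (fun n => ‖f n‖) = gsNorm p f := by
  unfold gsNorm; simp only [norm_norm]

lemma gsNorm_one (f : Fin N → E) : gsNorm 1 f = ∑ n, ‖f n‖ := by
  rw [gsNorm_ne_top (by simp)]
  simp [Real.rpow_one]

/-- Hölder inequality for signals. -/
lemma holder_signal {N : ℕ} (hN : 0 < N) (p p' : ℝ≥0∞) (hpp' : 1 / p + 1 / p' = 1)
    (b c : Fin N → ℝ) (hb : ∀ n, 0 ≤ b n) (hc : ∀ n, 0 ≤ c n) :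
    ∑ n, b n * c n ≤ gsNorm p' b * gsNorm p c := by
  haveI : Nonempty (Fin N) := ⟨⟨0, hN⟩⟩
  have hconj : ENNReal.HolderConjugate p p' := ENNReal.holderConjugate_iff.mpr (by rwa [one_div, one_div] at hpp')
  have hnb : ∀ n, ‖b n‖ = b n := fun n => Real.norm_of_nonneg (hb n)
  have hnc : ∀ n, ‖c n‖ = c n := fun n => Real.norm_of_nonneg (hc n)
  by_cases hp1 : p = 1
  · -- p' = ∞
    have hp'top : p' = ∞ := by
      have h := ENNReal.HolderConjugate.inv_add_inv_eq_one p p'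
      rw [hp1] at h; simp only [inv_one] at h
      have h2 : (1 : ℝ≥0∞) + p'⁻¹ = 1 + 0 := by simpa using h
      have := (ENNReal.add_right_inj (by simp)).mp h2
      rwa [ENNReal.inv_eq_zero] at this
    subst hp'top; subst hp1
    rw [gsNorm_one]
    calc ∑ n, b n * c n ≤ ∑ n, gsNorm ∞ b * c n := by
          refine Finset.sum_le_sum fun n _ => mul_le_mul_of_nonneg_right ?_ (hc n)
          rw [← hnb n]; exact le_gsNorm_top b n
      _ = gsNorm ∞ b * ∑ n, c n := by rw [Finset.mul_sum]
      _ = gsNorm ∞ b * ∑ n, ‖c n‖ := by simp_rw [hnc]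
  · by_cases hp'1 : p' = 1
    · -- p = ∞
      have hptop : p = ∞ := by
        have h := ENNReal.HolderConjugate.inv_add_inv_eq_one p p'
        rw [hp'1] at h; simp only [inv_one] at h
        have h2 : (1 : ℝ≥0∞) + p⁻¹ = 1 + 0 := by
          simpa [add_comm] using h
        have := (ENNReal.add_right_inj (by simp)).mp h2
        rwa [ENNReal.inv_eq_zero] at this
      subst hptop; subst hp'1
      rw [gsNorm_one]
      calc ∑ n, b n * c n ≤ ∑ n, b n * gsNorm ∞ c := by
            refine Finset.sum_le_sum fun n _ => mul_le_mul_of_nonneg_left ?_ (hb n)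
            rw [← hnc n]; exact le_gsNorm_top c n
        _ = (∑ n, b n) * gsNorm ∞ c := by rw [Finset.sum_mul]
        _ = (∑ n, ‖b n‖) * gsNorm ∞ c := by simp_rw [hnb]
    · -- 1 < p < ∞
      have hp1' : 1 < p := lt_of_le_of_ne (ENNReal.HolderConjugate.one_le p p') (Ne.symm hp1)
      have hp'1' : 1 < p' := lt_of_le_of_ne (ENNReal.HolderConjugate.one_le p' p) (Ne.symm hp'1)
      have hptop : p ≠ ∞ := by
        rintro rfl
        have := ENNReal.HolderConjugate.inv_add_inv_eq_one ∞ p'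
        simp at this
        exact hp'1 this
      have hp'top : p' ≠ ∞ := by
        rintro rfl
        have := ENNReal.HolderConjugate.inv_add_inv_eq_one ∞ p
        simp at this
        exact hp1 this
      set r := p.toReal with hr
      set s := p'.toReal with hs
      have hr1 : 1 < r := by
        rw [hr, ← ENNReal.toReal_one]
        exact ENNReal.toReal_strict_mono hptop hp1'
      have hrs : r⁻¹ + s⁻¹ = 1 := by
        have h0 : p ≠ 0 := ENNReal.HolderConjugate.ne_zero p p'
        have h0' : p' ≠ 0 := ENNReal.HolderConjugate.ne_zero p' p
        have := congrArg ENNReal.toReal (ENNReal.HolderConjugate.inv_add_inv_eq_one p p')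
        rwa [ENNReal.toReal_add (by simp [h0]) (by simp [h0']), ENNReal.toReal_inv,
          ENNReal.toReal_inv, ENNReal.toReal_one] at this
      have hconjR : Real.HolderConjugate r s := Real.holderConjugate_iff.mpr ⟨hr1, hrs⟩
      rw [gsNorm_ne_top hptop, gsNorm_ne_top hp'top]
      simp_rw [hnb, hnc]
      exact Real.inner_le_Lp_mul_Lq_of_nonneg Finset.univ hconjR.symm
        (fun n _ => hb n) (fun n _ => hc n)

end Helpers

section GFT

variable {𝕂 : Type*} [RCLike 𝕂] {X : Type*} [NormedAddCommGroup X]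
  [NormedSpace 𝕂 X] {N : ℕ}

lemma row_ortho (u : Fin N → Fin N → 𝕂) (hU : OrthoBasis u) (m n : Fin N) :
    ∑ k, (starRingEnd 𝕂) (u k m) * u k n = if m = n then 1 else 0 := by
  let M : Matrix (Fin N) (Fin N) 𝕂 := Matrix.of u
  have h1 : M * M.conjTranspose = 1 := by
    ext k l
    have h := congrArg (starRingEnd 𝕂) (hU k l)
    rw [map_sum] at h
    simp only [map_mul, RingHomCompTriple.comp_apply, RingHom.id_apply,
      starRingEnd_self_apply, apply_ite (starRingEnd 𝕂), map_one, map_zero] at h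
    simpa [Matrix.mul_apply, Matrix.conjTranspose_apply, Matrix.one_apply, M,
      RCLike.star_def] using h
  have h2 : M.conjTranspose * M = 1 := mul_eq_one_comm.mp h1
  have h3 := congrFun (congrFun h2 m) n
  simpa [Matrix.mul_apply, Matrix.conjTranspose_apply, Matrix.one_apply, M,
    RCLike.star_def] using h3

lemma gft_inversion (u : Fin N → Fin N → 𝕂) (hU : OrthoBasis u) (f : Fin N → X) (n : Fin N) :
    ∑ k, u k n • gft u f k = f n := by
  unfold gft
  calc ∑ k, u k n • ∑ m, (starRingEnd 𝕂) (u k m) • f m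
      = ∑ k, ∑ m, ((starRingEnd 𝕂) (u k m) * u k n) • f m := by
        refine Finset.sum_congr rfl fun k _ => ?_
        rw [Finset.smul_sum]
        refine Finset.sum_congr rfl fun m _ => ?_
        rw [smul_smul, mul_comm]
    _ = ∑ m, (∑ k, (starRingEnd 𝕂) (u k m) * u k n) • f m := by
        rw [Finset.sum_comm]
        exact Finset.sum_congr rfl fun m _ => (Finset.sum_smul).symm
    _ = f n := by
        simp_rw [row_ortho u hU]
        simp

end GFT


lemma aux_conj_inv {𝕂 : Type*} [RCLike 𝕂] {z : 𝕂} (h : z ≠ 0) :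
    (starRingEnd 𝕂) z * ((‖z‖ : 𝕂)⁻¹ * z) = ((‖z‖ : ℝ) : 𝕂) := by
  have hz : (‖z‖ : ℝ) ≠ 0 := norm_ne_zero_iff.mpr h
  rw [mul_left_comm, RCLike.conj_mul, ← RCLike.ofReal_pow, ← RCLike.ofReal_inv,
    ← RCLike.ofReal_mul]
  congr 1
  rw [pow_two, ← mul_assoc, inv_mul_cancel₀ hz, one_mul]

lemma aux_conj_rpow {𝕂 : Type*} [RCLike 𝕂] {z : 𝕂} (h : z ≠ 0) (t : ℝ) :
    (starRingEnd 𝕂) z * (((‖z‖ ^ (t - 2) : ℝ) : 𝕂) * z) = ((‖z‖ ^ t : ℝ) : 𝕂) := by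
  have hz : (0 : ℝ) < ‖z‖ := norm_pos_iff.mpr h
  rw [mul_left_comm, RCLike.conj_mul, ← RCLike.ofReal_pow, ← RCLike.ofReal_mul]
  congr 1
  rw [← Real.rpow_natCast ‖z‖ 2, ← Real.rpow_add hz]
  norm_num

/-- operator norm of `𝓕 : L^p → L^∞` equals `κ_{p'}(U)`. -/
theorem gft_norm_p_to_infty {𝕂 : Type*} [RCLike 𝕂] {X : Type*} [NormedAddCommGroup X]
    [NormedSpace 𝕂 X] [CompleteSpace X] {N : ℕ} (hN : 0 < N)
    (u : Fin N → Fin N → 𝕂) (hU : OrthoBasis u)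
    (p p' : ℝ≥0∞) (hp : 1 ≤ p) (hpp' : 1 / p + 1 / p' = 1) :
    (∀ f : Fin N → X, gsNorm ∞ (gft u f) ≤ coh p' u * gsNorm p f) ∧
    (∀ f : Fin N → X, gsNorm ∞ f ≤ coh p' (fun n k => u k n) * gsNorm p (gft u f)) ∧
    (Nontrivial X →
      ∃ f : Fin N → X, f ≠ 0 ∧ gsNorm ∞ (gft u f) = coh p' u * gsNorm p f) := by
  haveI : Nonempty (Fin N) := ⟨⟨0, hN⟩⟩
  have bdd : ∀ (g : Fin N → ℝ), BddAbove (Set.range g) := fun g => (Set.finite_range g).bddAbove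
  have hconj : ENNReal.HolderConjugate p p' := ENNReal.holderConjugate_iff.mpr (by rwa [one_div, one_div] at hpp')
  have key1 : ∀ (f : Fin N → X) (k : Fin N), ‖gft u f k‖ ≤ gsNorm p' (u k) * gsNorm p f := by
    intro f k
    calc ‖gft u f k‖ ≤ ∑ n, ‖u k n‖ * ‖f n‖ := by
          refine (norm_sum_le _ _).trans (Finset.sum_le_sum fun n _ => ?_)
          rw [norm_smul, RCLike.norm_conj]
      _ ≤ gsNorm p' (fun n => ‖u k n‖) * gsNorm p (fun n => ‖f n‖) :=
          holder_signal hN p p' hpp' _ _ (fun n => norm_nonneg _) (fun n => norm_nonneg _)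
      _ = gsNorm p' (u k) * gsNorm p f := by rw [gsNorm_norm, gsNorm_norm]
  have hcohL : ∀ k, gsNorm p' (u k) ≤ coh p' u := fun k =>
    le_ciSup (f := fun k => gsNorm p' (u k)) (bdd _) k
  have claim1 : ∀ f : Fin N → X, gsNorm ∞ (gft u f) ≤ coh p' u * gsNorm p f := by
    intro f
    refine gsNorm_top_le hN fun k => (key1 f k).trans ?_
    exact mul_le_mul_of_nonneg_right (hcohL k) (gsNorm_nonneg _ _)
  have claim2 : ∀ f : Fin N → X, gsNorm ∞ f ≤ coh p' (fun n k => u k n) * gsNorm p (gft u f) := by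
    intro f
    refine gsNorm_top_le hN fun n => ?_
    calc ‖f n‖ = ‖∑ k, u k n • gft u f k‖ := by rw [gft_inversion u hU f n]
      _ ≤ ∑ k, ‖u k n‖ * ‖gft u f k‖ := by
          refine (norm_sum_le _ _).trans (Finset.sum_le_sum fun k _ => ?_)
          rw [norm_smul]
      _ ≤ gsNorm p' (fun k => ‖u k n‖) * gsNorm p (fun k => ‖gft u f k‖) :=
          holder_signal hN p p' hpp' _ _ (fun _ => norm_nonneg _) (fun _ => norm_nonneg _)
      _ = gsNorm p' (fun k => u k n) * gsNorm p (gft u f) := by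
          rw [gsNorm_norm, gsNorm_norm]
      _ ≤ coh p' (fun n k => u k n) * gsNorm p (gft u f) :=
          mul_le_mul_of_nonneg_right
            (le_ciSup (f := fun n => gsNorm p' (fun k => u k n)) (bdd _) n) (gsNorm_nonneg _ _)
  refine ⟨claim1, claim2, fun hX => ?_⟩
  obtain ⟨x, hx⟩ := exists_ne (0 : X)
  obtain ⟨k₀, hk₀⟩ := Finite.exists_max fun k => gsNorm p' (u k)
  have hcoh : coh p' u = gsNorm p' (u k₀) := le_antisymm (ciSup_le hk₀) (hcohL k₀)
  have hrow : ∀ k, ∃ n, u k n ≠ 0 := by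
    intro k
    by_contra h
    push_neg at h
    have := hU k k
    simp [h] at this
  by_cases hp1 : p = 1
  · -- p = 1, p' = ∞
    have hp'top : p' = ∞ := by
      have h := ENNReal.HolderConjugate.inv_add_inv_eq_one p p'
      rw [hp1] at h; simp only [inv_one] at h
      have h2 : (1 : ℝ≥0∞) + p'⁻¹ = 1 + 0 := by simpa using h
      have := (ENNReal.add_right_inj (by simp)).mp h2
      rwa [ENNReal.inv_eq_zero] at this
    subst hp'top; subst hp1
    obtain ⟨q₀, hq₀⟩ := Finite.exists_max fun q : Fin N × Fin N => ‖u q.1 q.2‖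
    set k₁ := q₀.1
    set n₀ := q₀.2
    set f : Fin N → X := fun n => if n = n₀ then x else 0 with hf
    have hft : ∀ k, gft u f k = (starRingEnd 𝕂) (u k n₀) • x := by
      intro k
      simp [gft, hf, smul_ite, smul_zero, Finset.sum_ite_eq']
    have hftn : gsNorm ∞ (gft u f) = ‖u k₁ n₀‖ * ‖x‖ := by
      refine le_antisymm (gsNorm_top_le hN fun k => ?_) ?_
      · rw [hft, norm_smul, RCLike.norm_conj]
        exact mul_le_mul_of_nonneg_right (hq₀ (k, n₀)) (norm_nonneg x)
      · have := le_gsNorm_top (gft u f) k₁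
        rwa [hft, norm_smul, RCLike.norm_conj] at this
    have hfp : gsNorm 1 f = ‖x‖ := by
      rw [gsNorm_one]
      simp [hf, apply_ite (norm : X → ℝ), Finset.sum_ite_eq']
    have hcoh' : coh ∞ u = ‖u k₁ n₀‖ := by
      refine le_antisymm (ciSup_le fun k => gsNorm_top_le hN fun n => hq₀ (k, n)) ?_
      exact (le_gsNorm_top (u k₁) n₀).trans (hcohL k₁)
    refine ⟨f, ?_, ?_⟩
    · intro h
      exact hx (by simpa [hf] using congrFun h n₀)
    · rw [hftn, hfp, hcoh']
  by_cases hp'1 : p' = 1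
  · -- p = ∞, p' = 1
    have hptop : p = ∞ := by
      have h := ENNReal.HolderConjugate.inv_add_inv_eq_one p p'
      rw [hp'1] at h; simp only [inv_one] at h
      have h2 : (1 : ℝ≥0∞) + p⁻¹ = 1 + 0 := by simpa [add_comm] using h
      have := (ENNReal.add_right_inj (by simp)).mp h2
      rwa [ENNReal.inv_eq_zero] at this
    subst hptop; subst hp'1
    obtain ⟨n₁, hn₁⟩ := hrow k₀
    set c : Fin N → 𝕂 := fun n => if u k₀ n = 0 then 0 else (‖u k₀ n‖ : 𝕂)⁻¹ * u k₀ n with hc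
    set S : ℝ := ∑ n, ‖u k₀ n‖ with hS
    have hcc : ∀ n, (starRingEnd 𝕂) (u k₀ n) * c n = ((‖u k₀ n‖ : ℝ) : 𝕂) := by
      intro n
      by_cases h : u k₀ n = 0
      · simp [hc, h]
      · rw [hc]
        simp only [if_neg h]
        exact aux_conj_inv h
    have hcn : ∀ n, ‖c n‖ ≤ 1 := by
      intro n
      by_cases h : u k₀ n = 0
      · simp [hc, h]
      · have hz : (‖u k₀ n‖ : ℝ) ≠ 0 := norm_ne_zero_iff.mpr h
        rw [hc]
        simp only [if_neg h, norm_mul, norm_inv, RCLike.norm_ofReal, abs_of_nonneg (norm_nonneg _)]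
        rw [inv_mul_cancel₀ hz]
    have hcn₁ : ‖c n₁‖ = 1 := by
      have hz : (‖u k₀ n₁‖ : ℝ) ≠ 0 := norm_ne_zero_iff.mpr hn₁
      rw [hc]
      simp only [if_neg hn₁, norm_mul, norm_inv, RCLike.norm_ofReal, abs_of_nonneg (norm_nonneg _)]
      rw [inv_mul_cancel₀ hz]
    set f : Fin N → X := fun n => c n • x with hf
    have hftk : gft u f k₀ = ((S : ℝ) : 𝕂) • x := by
      rw [gft]
      simp_rw [hf, smul_smul, hcc]
      rw [← Finset.sum_smul, hS]
      norm_cast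
    have hSnn : 0 ≤ S := Finset.sum_nonneg fun n _ => norm_nonneg _
    have hfinf : gsNorm ∞ f = ‖x‖ := by
      refine le_antisymm (gsNorm_top_le hN fun n => ?_) ?_
      · rw [hf]
        calc ‖c n • x‖ = ‖c n‖ * ‖x‖ := norm_smul _ _
          _ ≤ 1 * ‖x‖ := mul_le_mul_of_nonneg_right (hcn n) (norm_nonneg x)
          _ = ‖x‖ := one_mul _
      · have := le_gsNorm_top f n₁
        rwa [hf, norm_smul, hcn₁, one_mul] at this
    have hcohS : coh 1 u = S := by
      rw [hcoh, gsNorm_one]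
    refine ⟨f, ?_, ?_⟩
    · intro h
      have h1 := congrFun h n₁
      rw [hf] at h1
      simp only [Pi.zero_apply] at h1
      have : c n₁ ≠ 0 := by
        intro hc0
        rw [hc0] at hcn₁
        simp at hcn₁
      exact hx ((smul_eq_zero.mp h1).resolve_left this)
    · rw [hcohS, hfinf]
      refine le_antisymm ?_ ?_
      · have := claim1 f
        rwa [hcohS, hfinf] at this
      · have := le_gsNorm_top (gft u f) k₀
        rw [hftk, norm_smul, RCLike.norm_ofReal, abs_of_nonneg hSnn] at this
        exact this
  · -- 1 < p < ∞
    have hp1' : 1 < p := lt_of_le_of_ne (ENNReal.HolderConjugate.one_le p p') (Ne.symm hp1)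
    have hptop : p ≠ ∞ := by
      rintro rfl
      have := ENNReal.HolderConjugate.inv_add_inv_eq_one ∞ p'
      simp at this
      exact hp'1 this
    have hp'top : p' ≠ ∞ := by
      rintro rfl
      have := ENNReal.HolderConjugate.inv_add_inv_eq_one ∞ p
      simp at this
      exact hp1 this
    set r := p.toReal with hr
    set s := p'.toReal with hs
    have hr1 : 1 < r := by
      rw [hr, ← ENNReal.toReal_one]
      exact ENNReal.toReal_strict_mono hptop hp1'
    have hrs : r⁻¹ + s⁻¹ = 1 := by
      have h0 : p ≠ 0 := ENNReal.HolderConjugate.ne_zero p p'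
      have h0' : p' ≠ 0 := ENNReal.HolderConjugate.ne_zero p' p
      have := congrArg ENNReal.toReal (ENNReal.HolderConjugate.inv_add_inv_eq_one p p')
      rwa [ENNReal.toReal_add (by simp [h0]) (by simp [h0']), ENNReal.toReal_inv,
        ENNReal.toReal_inv, ENNReal.toReal_one] at this
    have hconjR : Real.HolderConjugate r s := Real.holderConjugate_iff.mpr ⟨hr1, hrs⟩
    have hs1 : 1 < s := hconjR.symm.lt
    have hr0 : r ≠ 0 := hconjR.ne_zero
    have hs0 : s ≠ 0 := hconjR.symm.ne_zero
    obtain ⟨n₁, hn₁⟩ := hrow k₀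
    set c : Fin N → 𝕂 :=
      fun n => if u k₀ n = 0 then 0 else ((‖u k₀ n‖ ^ (s - 2) : ℝ) : 𝕂) * u k₀ n with hc
    have F1 : ∀ n, (starRingEnd 𝕂) (u k₀ n) * c n = ((‖u k₀ n‖ ^ s : ℝ) : 𝕂) := by
      intro n
      by_cases h : u k₀ n = 0
      · simp [hc, h, Real.zero_rpow hs0]
      · rw [hc]
        simp only [if_neg h]
        exact aux_conj_rpow h s
    have F2 : ∀ n, ‖c n‖ = ‖u k₀ n‖ ^ (s - 1) := by
      intro n
      by_cases h : u k₀ n = 0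
      · simp [hc, h, Real.zero_rpow (sub_ne_zero.mpr hs1.ne')]
      · have hz : (0 : ℝ) < ‖u k₀ n‖ := norm_pos_iff.mpr h
        rw [hc]
        simp only [if_neg h, norm_mul, RCLike.norm_ofReal,
          abs_of_nonneg (Real.rpow_nonneg (norm_nonneg _) _)]
        rw [← Real.rpow_add_one hz.ne' (s - 2)]
        congr 1
        ring
    have hsr : (s - 1) * r = s := by
      have := hconjR.mul_eq_add
      have h2 := hconjR.sub_one_mul_conj
      nlinarith
    have F3 : ∀ n, ‖c n‖ ^ r = ‖u k₀ n‖ ^ s := by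
      intro n
      rw [F2, ← Real.rpow_mul (norm_nonneg _), hsr]
    set T : ℝ := ∑ n, ‖u k₀ n‖ ^ s with hT
    have hT0 : 0 < T := by
      refine Finset.sum_pos' (fun n _ => Real.rpow_nonneg (norm_nonneg _) _) ?_
      exact ⟨n₁, Finset.mem_univ _, Real.rpow_pos_of_pos (norm_pos_iff.mpr hn₁) _⟩
    set f : Fin N → X := fun n => c n • x with hf
    have hftk : gft u f k₀ = ((T : ℝ) : 𝕂) • x := by
      rw [gft]
      simp_rw [hf, smul_smul, F1]
      rw [← Finset.sum_smul, hT]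
      norm_cast
    have hA : gsNorm p' (u k₀) = T ^ (1 / s) := by
      rw [gsNorm_ne_top hp'top, ← hs, ← hT]
    have hfp : gsNorm p f = T ^ (1 / r) * ‖x‖ := by
      rw [gsNorm_ne_top hptop, ← hr]
      have : ∀ n, ‖f n‖ ^ r = ‖u k₀ n‖ ^ s * ‖x‖ ^ r := by
        intro n
        rw [hf, norm_smul, Real.mul_rpow (norm_nonneg _) (norm_nonneg _), F3]
      simp_rw [this]
      rw [← Finset.sum_mul, ← hT,
        Real.mul_rpow hT0.le (Real.rpow_nonneg (norm_nonneg _) _)]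
      congr 1
      rw [← Real.rpow_mul (norm_nonneg _), one_div, mul_inv_cancel₀ hr0, Real.rpow_one]
    have hTT : T ^ (1 / s) * T ^ (1 / r) = T := by
      rw [← Real.rpow_add hT0]
      rw [one_div, one_div, add_comm, hrs, Real.rpow_one]
    refine ⟨f, ?_, ?_⟩
    · intro h
      have h1 := congrFun h n₁
      rw [hf] at h1
      simp only [Pi.zero_apply] at h1
      have hcne : c n₁ ≠ 0 := by
        intro hc0
        have h2 := F2 n₁
        rw [hc0, norm_zero] at h2
        exact absurd h2.symm (Real.rpow_pos_of_pos (norm_pos_iff.mpr hn₁) _).ne'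
      exact hx ((smul_eq_zero.mp h1).resolve_left hcne)
    · rw [hcoh, hA, hfp]
      refine le_antisymm ?_ ?_
      · have := claim1 f
        rwa [hcoh, hA, hfp] at this
      · have h2 := le_gsNorm_top (gft u f) k₀
        rw [hftk, norm_smul, RCLike.norm_ofReal, abs_of_nonneg hT0.le] at h2
        calc T ^ (1 / s) * (T ^ (1 / r) * ‖x‖) = T * ‖x‖ := by rw [← mul_assoc, hTT]
          _ ≤ gsNorm ∞ (gft u f) := h2
end

section
/- Let q ∈ [1,∞]. For every signal f : V → X, the graph Fourier transform satisfies ‖f̂‖_q ≤ κ_q(U*)·‖f‖_1 and ‖f‖_q ≤ κ_q(U)·‖f̂‖_1. Moreover, if X is nontrivial, the first bound is sharp: the operator norm of 𝓕 : L^1(V,X) → L^q(V,X) equals κ_q(U*), i.e., sup over nonzero f of ‖f̂‖_q/‖f‖_1 equals κ_q(U*). -/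
open Finset
open scoped ENNReal

section Aux
variable {E : Type*} [NormedAddCommGroup E] {N : ℕ}

lemma gsNorm_congr {F : Type*} [NormedAddCommGroup F] (p : ℝ≥0∞) {f : Fin N → E}
    {g : Fin N → F} (h : ∀ n, ‖f n‖ = ‖g n‖) : gsNorm p f = gsNorm p g := by
  unfold gsNorm; simp only [h]

lemma one_le_toReal {p : ℝ≥0∞} (hp : 1 ≤ p) (hp' : p ≠ ∞) : 1 ≤ p.toReal := by
  simpa using ENNReal.toReal_mono hp' hp

lemma gsNorm_zero (p : ℝ≥0∞) (hp : 1 ≤ p) : gsNorm p (0 : Fin N → E) = 0 := by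
  unfold gsNorm
  rcases eq_or_ne p ∞ with h | h
  · rw [if_pos h]; simp
  · rw [if_neg h]
    have ht : 0 < p.toReal := lt_of_lt_of_le one_pos (one_le_toReal hp h)
    simp [Real.zero_rpow ht.ne', Real.zero_rpow (inv_ne_zero ht.ne'), one_div]

lemma gsNorm_add_le (p : ℝ≥0∞) (hp : 1 ≤ p) (f g : Fin N → E) :
    gsNorm p (f + g) ≤ gsNorm p f + gsNorm p g := by
  unfold gsNorm
  rcases eq_or_ne p ∞ with h | h
  · simp only [if_pos h]
    refine Real.iSup_le (fun n => ?_) ?_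
    · refine le_trans (norm_add_le _ _) (add_le_add ?_ ?_)
      · exact le_ciSup (f := fun n => ‖f n‖) (Set.finite_range _).bddAbove n
      · exact le_ciSup (f := fun n => ‖g n‖) (Set.finite_range _).bddAbove n
    · exact add_nonneg (Real.iSup_nonneg fun n => norm_nonneg _)
        (Real.iSup_nonneg fun n => norm_nonneg _)
  · simp only [if_neg h]
    have ht : 1 ≤ p.toReal := one_le_toReal hp h
    calc (∑ n, ‖(f + g) n‖ ^ p.toReal) ^ (1 / p.toReal)
        ≤ (∑ n, (‖f n‖ + ‖g n‖) ^ p.toReal) ^ (1 / p.toReal) := by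
          refine Real.rpow_le_rpow (by positivity) (Finset.sum_le_sum fun i _ => ?_) (by positivity)
          exact Real.rpow_le_rpow (norm_nonneg _) (norm_add_le _ _) (by linarith)
      _ ≤ _ := Real.Lp_add_le_of_nonneg Finset.univ ht (fun i _ => norm_nonneg _)
          (fun i _ => norm_nonneg _)

lemma gsNorm_sum_le {ι : Type*} (p : ℝ≥0∞) (hp : 1 ≤ p) (s : Finset ι) (f : ι → Fin N → E) :
    gsNorm p (∑ i ∈ s, f i) ≤ ∑ i ∈ s, gsNorm p (f i) := by
  classical
  induction s using Finset.induction_on with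
  | empty => simp [gsNorm_zero p hp]
  | insert a s hnot ih =>
    rw [Finset.sum_insert hnot, Finset.sum_insert hnot]
    exact le_trans (gsNorm_add_le p hp _ _) (by linarith)

lemma gsNorm_smul {𝕂 : Type*} [RCLike 𝕂] {X : Type*} [NormedAddCommGroup X]
    [NormedSpace 𝕂 X] (hN : 0 < N) (p : ℝ≥0∞) (hp : 1 ≤ p) (a : Fin N → 𝕂) (x : X) :
    gsNorm p (fun n => a n • x) = gsNorm p a * ‖x‖ := by
  haveI : Nonempty (Fin N) := Fin.pos_iff_nonempty.mp hN
  unfold gsNorm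
  rcases eq_or_ne p ∞ with h | h
  · simp only [if_pos h]
    simp only [norm_smul]
    refine le_antisymm (Real.iSup_le (fun n => ?_)
      (mul_nonneg (Real.iSup_nonneg fun n => norm_nonneg _) (norm_nonneg _))) ?_
    · exact mul_le_mul_of_nonneg_right
        (le_ciSup (f := fun n => ‖a n‖) (Set.finite_range _).bddAbove n) (norm_nonneg _)
    · obtain ⟨n₀, hn₀⟩ := Finite.exists_max (fun n => ‖a n‖)
      have : (⨆ n, ‖a n‖) = ‖a n₀‖ :=
        le_antisymm (Real.iSup_le hn₀ (norm_nonneg _))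
          (le_ciSup (f := fun n => ‖a n‖) (Set.finite_range _).bddAbove n₀)
      rw [this]
      exact le_ciSup (Set.finite_range fun n => ‖a n‖ * ‖x‖).bddAbove n₀
  · simp only [if_neg h]
    have ht : 0 < p.toReal := lt_of_lt_of_le one_pos (one_le_toReal hp h)
    simp only [norm_smul, Real.mul_rpow (norm_nonneg _) (norm_nonneg _), ← Finset.sum_mul]
    rw [Real.mul_rpow (by positivity) (by positivity), ← Real.rpow_mul (norm_nonneg x),
      mul_one_div_cancel ht.ne', Real.rpow_one]

lemma gsNorm_single {x : E} (hN : 0 < N) (p : ℝ≥0∞) (hp : 1 ≤ p) (n₀ : Fin N) :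
    gsNorm p (Pi.single n₀ x) = ‖x‖ := by
  haveI : Nonempty (Fin N) := Fin.pos_iff_nonempty.mp hN
  unfold gsNorm
  rcases eq_or_ne p ∞ with h | h
  · rw [if_pos h]
    refine le_antisymm (Real.iSup_le (fun n => ?_) (norm_nonneg _)) ?_
    · by_cases hn : n = n₀ <;> simp [hn, Pi.single_apply]
    · have := le_ciSup (Set.finite_range fun n => ‖Pi.single (M := fun _ => E) n₀ x n‖).bddAbove n₀
      simpa using this
  · rw [if_neg h]
    have ht : 0 < p.toReal := lt_of_lt_of_le one_pos (one_le_toReal hp h)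
    rw [Finset.sum_eq_single n₀]
    · rw [Pi.single_eq_same, ← Real.rpow_mul (norm_nonneg _), mul_one_div_cancel ht.ne',
        Real.rpow_one]
    · intro n _ hn
      simp [Pi.single_eq_of_ne hn, Real.zero_rpow ht.ne']
    · simp

end Aux

/-- operator norm of `𝓕 : L^1 → L^q` equals `κ_q(U*)`. -/
theorem gft_norm_one_to_q {𝕂 : Type*} [RCLike 𝕂] {X : Type*} [NormedAddCommGroup X]
    [NormedSpace 𝕂 X] [CompleteSpace X] {N : ℕ} (hN : 0 < N)
    (u : Fin N → Fin N → 𝕂) (hU : OrthoBasis u)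
    (q : ℝ≥0∞) (hq : 1 ≤ q) :
    (∀ f : Fin N → X, gsNorm q (gft u f) ≤ coh q (fun n k => u k n) * gsNorm 1 f) ∧
    (∀ f : Fin N → X, gsNorm q f ≤ coh q u * gsNorm 1 (gft u f)) ∧
    (Nontrivial X →
      ∃ f : Fin N → X, f ≠ 0 ∧ gsNorm q (gft u f) = coh q (fun n k => u k n) * gsNorm 1 f) := by
  haveI : Nonempty (Fin N) := Fin.pos_iff_nonempty.mp hN
  have hrow : ∀ n, gsNorm q (fun k => u k n) ≤ coh q (fun n k => u k n) := fun n =>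
    le_ciSup (f := fun n => gsNorm q (fun k => u k n)) (Set.finite_range _).bddAbove n
  have hcol : ∀ k, gsNorm q (u k) ≤ coh q u := fun k =>
    le_ciSup (f := fun k => gsNorm q (u k)) (Set.finite_range _).bddAbove k
  have hconj : ∀ n, gsNorm q (fun k => (starRingEnd 𝕂) (u k n)) = gsNorm q (fun k => u k n) :=
    fun n => gsNorm_congr q fun k => by simp
  have part1 : ∀ f : Fin N → X, gsNorm q (gft u f) ≤ coh q (fun n k => u k n) * gsNorm 1 f := by
    intro f
    have h1 : gft u f = ∑ n, (fun k => (starRingEnd 𝕂) (u k n) • f n) := by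
      funext k; simp only [gft, Finset.sum_apply]
    calc gsNorm q (gft u f) ≤ ∑ n, gsNorm q (fun k => (starRingEnd 𝕂) (u k n) • f n) := by
          rw [h1]; exact gsNorm_sum_le q hq _ _
      _ = ∑ n, gsNorm q (fun k => u k n) * ‖f n‖ := by
          refine Finset.sum_congr rfl fun n _ => ?_
          rw [gsNorm_smul hN q hq, hconj]
      _ ≤ ∑ n, coh q (fun n k => u k n) * ‖f n‖ :=
          Finset.sum_le_sum fun n _ => mul_le_mul_of_nonneg_right (hrow n) (norm_nonneg _)
      _ = coh q (fun n k => u k n) * gsNorm 1 f := by rw [gsNorm_one, Finset.mul_sum]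
  refine ⟨part1, ?_, ?_⟩
  · -- inverse bound
    have key : ∀ n m : Fin N, ∑ k, u k n * (starRingEnd 𝕂) (u k m)
        = if n = m then (1 : 𝕂) else 0 := by
      have h1 : (Matrix.of u) * (Matrix.of u).conjTranspose = 1 := by
        ext k l
        have h2 := congrArg (starRingEnd 𝕂) (hU k l)
        rw [map_sum] at h2
        simp only [map_mul, RCLike.conj_conj] at h2
        simp only [Matrix.mul_apply, Matrix.conjTranspose_apply, Matrix.of_apply,
          Matrix.one_apply, RCLike.star_def]
        rw [h2]
        split <;> simp
      have h2 : (Matrix.of u).conjTranspose * (Matrix.of u) = 1 := mul_eq_one_comm.mp h1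
      intro n m
      have h3 : ((Matrix.of u).conjTranspose * Matrix.of u) m n = (1 : Matrix (Fin N) (Fin N) 𝕂) m n := by
        rw [h2]
      simp only [Matrix.mul_apply, Matrix.conjTranspose_apply, Matrix.of_apply,
        Matrix.one_apply] at h3
      rw [show (if n = m then (1:𝕂) else 0) = if m = n then (1:𝕂) else 0 by simp [eq_comm], ← h3]
      exact Finset.sum_congr rfl fun k _ => mul_comm _ _
    intro f
    have hinv : f = ∑ k, (fun n => u k n • gft u f k) := by
      funext n
      rw [Finset.sum_apply]
      calc f n = ∑ m, (if n = m then (1:𝕂) else 0) • f m := by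
            simp [ite_smul]
        _ = ∑ m, (∑ k, u k n * (starRingEnd 𝕂) (u k m)) • f m := by
            simp only [key]
        _ = ∑ k, u k n • gft u f k := by
            simp only [gft, Finset.smul_sum, smul_smul, Finset.sum_smul]
            rw [Finset.sum_comm]
    calc gsNorm q f ≤ ∑ k, gsNorm q (fun n => u k n • gft u f k) := by
          conv_lhs => rw [hinv]
          exact gsNorm_sum_le q hq _ _
      _ = ∑ k, gsNorm q (u k) * ‖gft u f k‖ := Finset.sum_congr rfl fun k _ =>
          gsNorm_smul hN q hq (u k) _
      _ ≤ ∑ k, coh q u * ‖gft u f k‖ :=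
          Finset.sum_le_sum fun k _ => mul_le_mul_of_nonneg_right (hcol k) (norm_nonneg _)
      _ = coh q u * gsNorm 1 (gft u f) := by rw [gsNorm_one, Finset.mul_sum]
  · -- sharpness
    intro hX
    obtain ⟨x, hx⟩ := exists_ne (0 : X)
    obtain ⟨n₀, hn₀⟩ := Finite.exists_max (fun n => gsNorm q (fun k => u k n))
    have hcoh : coh q (fun n k => u k n) = gsNorm q (fun k => u k n₀) :=
      le_antisymm (Real.iSup_le hn₀ (gsNorm_nonneg _ _)) (hrow n₀)
    refine ⟨Pi.single n₀ x, fun h0 => hx ?_, ?_⟩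
    · have := congrFun h0 n₀
      simpa using this
    · have hft : gft u (Pi.single n₀ x) = fun k => (starRingEnd 𝕂) (u k n₀) • x := by
        funext k
        simp only [gft]
        rw [Finset.sum_eq_single n₀]
        · rw [Pi.single_eq_same]
        · intro n _ hn; simp [Pi.single_eq_of_ne hn]
        · simp
      rw [hft, gsNorm_single hN 1 le_rfl, hcoh, gsNorm_smul hN q hq, hconj]
end

section
/- Let N ≥ 2 and let X be a Banach space over 𝕂. Then the following are equivalent: (i) for every orthonormal basis B = {u_1,…,u_N} of 𝕂^N and every signal f : V → X, the graph Fourier transform with respect to B satisfies ‖f̂‖_2 = ‖f‖_2; (ii) the norm of X satisfies the parallelogram law ‖x+y‖² + ‖x−y‖² = 2‖x‖² + 2‖y‖² for all x, y ∈ X (equivalently, the norm of X is induced by an inner product). -/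
open Finset
open scoped ENNReal

section Aux

open Finset

lemma gsNorm_two {E : Type*} [NormedAddCommGroup E] {N : ℕ} (f : Fin N → E) :
    gsNorm 2 f = (∑ n, ‖f n‖ ^ 2) ^ (1/2 : ℝ) := by
  simp only [gsNorm]
  norm_num [Real.rpow_natCast]

lemma sq_of_half_pow {A B : ℝ} (hA : 0 ≤ A) (hB : 0 ≤ B)
    (h : A ^ (1/2 : ℝ) = B ^ (1/2 : ℝ)) : A = B := by
  have e : ∀ a : ℝ, 0 ≤ a → (a ^ (1/2:ℝ)) ^ (2:ℝ) = a := fun a ha => by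
    rw [← Real.rpow_mul ha]; norm_num
  calc A = (A ^ (1/2:ℝ)) ^ (2:ℝ) := (e A hA).symm
    _ = (B ^ (1/2:ℝ)) ^ (2:ℝ) := by rw [h]
    _ = B := e B hB

lemma sum_two {E : Type*} [AddCommMonoid E] {M : ℕ} (g : Fin (M + 2) → E)
    (hg : ∀ n, n ≠ 0 → n ≠ 1 → g n = 0) : ∑ n, g n = g 0 + g 1 := by
  have h01 : (0 : Fin (M + 2)) ≠ 1 := by simp [Fin.ext_iff]
  rw [← Finset.sum_pair h01]
  refine (Finset.sum_subset (Finset.subset_univ _) fun n _ hn => ?_).symm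
  simp only [Finset.mem_insert, Finset.mem_singleton, not_or] at hn
  exact hg n hn.1 hn.2

open Matrix in
lemma ortho_cols {𝕂 : Type*} [RCLike 𝕂] {N : ℕ} {u : Fin N → Fin N → 𝕂} (h : OrthoBasis u)
    (n m : Fin N) : ∑ k, u k n * (starRingEnd 𝕂) (u k m) = if n = m then (1 : 𝕂) else 0 := by
  classical
  set M : Matrix (Fin N) (Fin N) 𝕂 := Matrix.of (fun k n => (starRingEnd 𝕂) (u k n)) with hM
  have h1 : M * Mᴴ = 1 := by
    ext k l
    simp only [Matrix.mul_apply, Matrix.conjTranspose_apply, hM, Matrix.of_apply,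
      RCLike.star_def, RCLike.conj_conj]
    rw [h k l]
    simp [Matrix.one_apply]
  have h2 : Mᴴ * M = 1 := mul_eq_one_comm.mp h1
  have := congrFun (congrFun h2 n) m
  simp only [Matrix.mul_apply, Matrix.conjTranspose_apply, hM, Matrix.of_apply,
    RCLike.star_def, RCLike.conj_conj, Matrix.one_apply] at this
  simpa [mul_comm] using this

lemma plancherel_sq {𝕂 : Type*} [RCLike 𝕂] {X : Type*} [NormedAddCommGroup X]
    [InnerProductSpace 𝕂 X] {N : ℕ} {u : Fin N → Fin N → 𝕂} (h : OrthoBasis u)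
    (f : Fin N → X) : ∑ k, ‖gft u f k‖ ^ 2 = ∑ n, ‖f n‖ ^ 2 := by
  classical
  have key : ∑ k, (inner 𝕂 (gft u f k) (gft u f k) : 𝕂) = ∑ n, (inner 𝕂 (f n) (f n) : 𝕂) := by
    have e1 : ∀ k, (inner 𝕂 (gft u f k) (gft u f k) : 𝕂)
        = ∑ n, ∑ m, (u k n * (starRingEnd 𝕂) (u k m)) * (inner 𝕂 (f n) (f m) : 𝕂) := by
      intro k
      rw [show gft u f k = ∑ n, (starRingEnd 𝕂) (u k n) • f n from rfl, sum_inner]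
      refine Finset.sum_congr rfl fun n _ => ?_
      rw [inner_smul_left, RCLike.conj_conj, inner_sum, Finset.mul_sum]
      refine Finset.sum_congr rfl fun m _ => ?_
      rw [inner_smul_right]
      ring
    simp only [e1]
    rw [Finset.sum_comm]
    rw [Finset.sum_congr rfl (fun n _ => Finset.sum_comm)]
    have e2 : ∀ n m : Fin N, ∑ k, (u k n * (starRingEnd 𝕂) (u k m)) * (inner 𝕂 (f n) (f m) : 𝕂)
        = (if n = m then (1:𝕂) else 0) * (inner 𝕂 (f n) (f m) : 𝕂) := by
      intro n m
      rw [← Finset.sum_mul, ortho_cols h]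
    simp only [e2, ite_mul, one_mul, zero_mul]
    simp
  have e3 : ∑ k, ((‖gft u f k‖ : 𝕂)) ^ 2 = ∑ n, ((‖f n‖ : 𝕂)) ^ 2 := by
    simpa only [inner_self_eq_norm_sq_to_K] using key
  have e4 : ((∑ k, ‖gft u f k‖ ^ 2 : ℝ) : 𝕂) = ((∑ n, ‖f n‖ ^ 2 : ℝ) : 𝕂) := by
    push_cast
    exact e3
  exact_mod_cast e4

noncomputable def rotB (𝕂 : Type*) [RCLike 𝕂] (M : ℕ) : Fin (M+2) → Fin (M+2) → 𝕂 :=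
  fun k n =>
    if k = 0 then (if n = 0 then ((Real.sqrt 2)⁻¹ : ℝ) else if n = 1 then ((Real.sqrt 2)⁻¹ : ℝ) else 0)
    else if k = 1 then (if n = 0 then ((Real.sqrt 2)⁻¹ : ℝ) else if n = 1 then -((Real.sqrt 2)⁻¹ : ℝ) else 0)
    else if n = k then 1 else 0

lemma cc_eq {𝕂 : Type*} [RCLike 𝕂] :
    ((((Real.sqrt 2)⁻¹ : ℝ) : 𝕂)) * (((Real.sqrt 2)⁻¹ : ℝ) : 𝕂) = 2⁻¹ := by
  rw [← RCLike.ofReal_mul]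
  have h : ((Real.sqrt 2)⁻¹ : ℝ) * (Real.sqrt 2)⁻¹ = 2⁻¹ := by
    rw [← mul_inv, Real.mul_self_sqrt (by norm_num)]
  rw [h]
  simp [map_ofNat]

lemma fin_h10 {M : ℕ} : (1 : Fin (M + 2)) ≠ 0 := by simp [Fin.ext_iff]
lemma fin_h01 {M : ℕ} : (0 : Fin (M + 2)) ≠ 1 := by simp [Fin.ext_iff]

lemma rotB00 (𝕂 : Type*) [RCLike 𝕂] (M : ℕ) : rotB 𝕂 M 0 0 = (((Real.sqrt 2)⁻¹ : ℝ) : 𝕂) := by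
  simp [rotB]
lemma rotB01 (𝕂 : Type*) [RCLike 𝕂] (M : ℕ) : rotB 𝕂 M 0 1 = (((Real.sqrt 2)⁻¹ : ℝ) : 𝕂) := by
  simp [rotB, fin_h01]
lemma rotB10 (𝕂 : Type*) [RCLike 𝕂] (M : ℕ) : rotB 𝕂 M 1 0 = (((Real.sqrt 2)⁻¹ : ℝ) : 𝕂) := by
  simp [rotB, fin_h10]
lemma rotB11 (𝕂 : Type*) [RCLike 𝕂] (M : ℕ) : rotB 𝕂 M 1 1 = -(((Real.sqrt 2)⁻¹ : ℝ) : 𝕂) := by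
  simp [rotB, fin_h10]

lemma rotB_ortho (𝕂 : Type*) [RCLike 𝕂] (M : ℕ) : OrthoBasis (rotB 𝕂 M) := by
  classical
  intro k l
  by_cases hk0 : k = 0
  · subst hk0
    by_cases hl0 : l = 0
    · subst hl0
      rw [sum_two _ (fun n n0 n1 => by simp [rotB, n0, n1]), rotB00, rotB01,
        RCLike.conj_ofReal, cc_eq, if_pos rfl]
      norm_num
    · by_cases hl1 : l = 1
      · subst hl1
        rw [sum_two _ (fun n n0 n1 => by simp [rotB, n0, n1]), rotB00, rotB01, rotB10, rotB11,
          RCLike.conj_ofReal, if_neg fin_h01]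
        ring
      · rw [Finset.sum_congr rfl (fun n _ => by
          rw [show rotB 𝕂 M l n = if n = l then (1:𝕂) else 0 from by simp [rotB, hl0, hl1],
            mul_ite, mul_one, mul_zero])]
        rw [Finset.sum_ite_eq' Finset.univ l (fun n => (starRingEnd 𝕂) (rotB 𝕂 M 0 n))]
        simp [rotB, hl0, hl1, Ne.symm hl0]
  · by_cases hk1 : k = 1
    · subst hk1
      by_cases hl0 : l = 0
      · subst hl0
        rw [sum_two _ (fun n n0 n1 => by simp [rotB, n0, n1]), rotB00, rotB01, rotB10, rotB11,
          map_neg, RCLike.conj_ofReal, if_neg fin_h10]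
        ring
      · by_cases hl1 : l = 1
        · subst hl1
          rw [sum_two _ (fun n n0 n1 => by simp [rotB, n0, n1]), rotB10, rotB11,
            map_neg, RCLike.conj_ofReal, neg_mul_neg, cc_eq, if_pos rfl]
          norm_num
        · rw [Finset.sum_congr rfl (fun n _ => by
            rw [show rotB 𝕂 M l n = if n = l then (1:𝕂) else 0 from by simp [rotB, hl0, hl1],
              mul_ite, mul_one, mul_zero])]
          rw [Finset.sum_ite_eq' Finset.univ l (fun n => (starRingEnd 𝕂) (rotB 𝕂 M 1 n))]
          simp [rotB, hl0, hl1, Ne.symm hl1]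
    · rw [Finset.sum_congr rfl (fun n _ => by
        rw [show (starRingEnd 𝕂) (rotB 𝕂 M k n) = if n = k then (1:𝕂) else 0 from by
          simp [rotB, hk0, hk1, apply_ite (starRingEnd 𝕂)],
          ite_mul, one_mul, zero_mul])]
      rw [Finset.sum_ite_eq' Finset.univ k (fun n => rotB 𝕂 M l n)]
      by_cases hl0 : l = 0
      · subst hl0; simp [rotB, hk0, hk1, Ne.symm hk0]
      · by_cases hl1 : l = 1
        · subst hl1; simp [rotB, hk0, hk1, Ne.symm hk1]
        · simp [rotB, hl0, hl1, eq_comm]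

end Aux

/-- for `N ≥ 2`, Plancherel's equality holds for every orthonormal basis and
every signal iff the norm of `X` satisfies the parallelogram law. -/
theorem gft_plancherel_iff_parallelogram {𝕂 : Type*} [RCLike 𝕂] {X : Type*}
    [NormedAddCommGroup X] [NormedSpace 𝕂 X] [CompleteSpace X] {N : ℕ} (hN : 2 ≤ N) :
    ((∀ u : Fin N → Fin N → 𝕂, OrthoBasis u →
        ∀ f : Fin N → X, gsNorm 2 (gft u f) = gsNorm 2 f) ↔
      (∀ x y : X, ‖x + y‖ ^ 2 + ‖x - y‖ ^ 2 = 2 * ‖x‖ ^ 2 + 2 * ‖y‖ ^ 2)) := by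
  constructor
  · intro hP x y
    obtain ⟨M, rfl⟩ : ∃ M, N = M + 2 := ⟨N - 2, by omega⟩
    set f : Fin (M+2) → X := fun n => if n = 0 then x else if n = 1 then y else 0 with hf
    have hP' := hP (rotB 𝕂 M) (rotB_ortho 𝕂 M) f
    rw [gsNorm_two, gsNorm_two] at hP'
    have hsum := sq_of_half_pow (by positivity) (by positivity) hP'
    have hc0 : (0:ℝ) ≤ (Real.sqrt 2)⁻¹ := by positivity
    have hcsq : ((Real.sqrt 2)⁻¹ : ℝ) ^ 2 = 2⁻¹ := by
      rw [sq, ← mul_inv, Real.mul_self_sqrt (by norm_num)]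
    have S2 : ∑ n, ‖f n‖ ^ 2 = ‖x‖ ^ 2 + ‖y‖ ^ 2 := by
      rw [sum_two (fun n => ‖f n‖ ^ 2) (fun n n0 n1 => by simp [hf, n0, n1])]
      simp [hf, fin_h10]
    have G0 : gft (rotB 𝕂 M) f 0 = ((((Real.sqrt 2)⁻¹ : ℝ)) : 𝕂) • (x + y) := by
      rw [show gft (rotB 𝕂 M) f 0 = ∑ n, (starRingEnd 𝕂) (rotB 𝕂 M 0 n) • f n from rfl,
        sum_two _ (fun n n0 n1 => by simp [hf, n0, n1]), rotB00, rotB01, RCLike.conj_ofReal]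
      simp [hf, fin_h10, smul_add]
    have G1 : gft (rotB 𝕂 M) f 1 = ((((Real.sqrt 2)⁻¹ : ℝ)) : 𝕂) • (x - y) := by
      rw [show gft (rotB 𝕂 M) f 1 = ∑ n, (starRingEnd 𝕂) (rotB 𝕂 M 1 n) • f n from rfl,
        sum_two _ (fun n n0 n1 => by simp [hf, n0, n1]), rotB10, rotB11, map_neg,
        RCLike.conj_ofReal]
      simp [hf, fin_h10, smul_sub, sub_eq_add_neg]
    have Gk : ∀ k, k ≠ 0 → k ≠ 1 → gft (rotB 𝕂 M) f k = 0 := by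
      intro k k0 k1
      rw [show gft (rotB 𝕂 M) f k = ∑ n, (starRingEnd 𝕂) (rotB 𝕂 M k n) • f n from rfl]
      refine Finset.sum_eq_zero fun n _ => ?_
      by_cases hn : n = k
      · subst hn; simp [hf, k0, k1]
      · have h0 : rotB 𝕂 M k n = 0 := by simp [rotB, k0, k1, hn]
        simp [h0]
    have SG : ∑ k, ‖gft (rotB 𝕂 M) f k‖ ^ 2
        = ‖((((Real.sqrt 2)⁻¹ : ℝ)) : 𝕂) • (x + y)‖ ^ 2
          + ‖((((Real.sqrt 2)⁻¹ : ℝ)) : 𝕂) • (x - y)‖ ^ 2 := by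
      rw [sum_two (fun k => ‖gft (rotB 𝕂 M) f k‖ ^ 2)
        (fun k k0 k1 => by simp [Gk k k0 k1]), G0, G1]
    have hnorm : ∀ v : X, ‖((((Real.sqrt 2)⁻¹ : ℝ)) : 𝕂) • v‖ ^ 2 = 2⁻¹ * ‖v‖ ^ 2 := fun v => by
      rw [norm_smul, RCLike.norm_ofReal, abs_of_nonneg hc0, mul_pow, hcsq]
    rw [SG, S2, hnorm, hnorm] at hsum
    linarith
  · intro hpar u hu f
    letI : InnerProductSpace 𝕂 X :=
      InnerProductSpace.ofNorm 𝕂 (E := X) (fun x y => by linear_combination hpar x y)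
    rw [gsNorm_two, gsNorm_two, plancherel_sq hu f]
end

section
/- Let N ≥ 2 and let X be a Banach space over 𝕂. Then the following are equivalent: (i) for every orthonormal basis B = {u_1,…,u_N} of 𝕂^N, the graph Fourier transform 𝓕 with respect to B satisfies ‖𝓕‖_{2→2} = 1, i.e., ‖f̂‖_2 ≤ ‖f‖_2 for every signal f : V → X (with the bound attained); (ii) the norm of X satisfies the parallelogram law ‖x+y‖² + ‖x−y‖² = 2‖x‖² + 2‖y‖² for all x, y ∈ X. -/
open Finset
open scoped ENNReal

lemma gsNorm_two_eq {E : Type*} [NormedAddCommGroup E] {N : ℕ} (f : Fin N → E) :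
    gsNorm 2 f = Real.sqrt (∑ n, ‖f n‖ ^ 2) := by
  rw [gsNorm, if_neg (by norm_num), ENNReal.toReal_ofNat, Real.sqrt_eq_rpow]
  congr 1
  refine Finset.sum_congr rfl fun n _ => ?_
  rw [show ((2:ℝ)) = ((2:ℕ):ℝ) by norm_num, Real.rpow_natCast]

lemma orthoBasis_cols {𝕂 : Type*} [RCLike 𝕂] {N : ℕ} {u : Fin N → Fin N → 𝕂}
    (hu : OrthoBasis u) (n m : Fin N) :
    ∑ k, u k n * (starRingEnd 𝕂) (u k m) = if n = m then 1 else 0 := by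
  classical
  set A : Matrix (Fin N) (Fin N) 𝕂 := Matrix.of u with hA
  have h1 : A * A.conjTranspose = 1 := by
    ext k l
    have h := congrArg (starRingEnd 𝕂) (hu k l)
    simp only [map_sum, map_mul, RCLike.conj_conj] at h
    rw [Matrix.mul_apply]
    simp only [Matrix.conjTranspose_apply, hA, Matrix.of_apply, Matrix.one_apply,
      ← starRingEnd_apply]
    rw [h]
    split <;> simp
  have h2 : A.conjTranspose * A = 1 := mul_eq_one_comm.mp h1
  have h3 := congrFun (congrFun h2 m) n
  rw [Matrix.mul_apply] at h3
  simp only [Matrix.conjTranspose_apply, hA, Matrix.of_apply, Matrix.one_apply,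
    ← starRingEnd_apply] at h3
  calc ∑ k, u k n * (starRingEnd 𝕂) (u k m)
      = ∑ k, (starRingEnd 𝕂) (u k m) * u k n :=
        Finset.sum_congr rfl fun k _ => mul_comm _ _
    _ = if n = m then 1 else 0 := by rw [h3]; simp [eq_comm]

lemma sum_sq_gft {𝕂 : Type*} [RCLike 𝕂] {X : Type*} [NormedAddCommGroup X]
    [NormedSpace 𝕂 X]
    (hpar : ∀ x y : X, ‖x + y‖ ^ 2 + ‖x - y‖ ^ 2 = 2 * ‖x‖ ^ 2 + 2 * ‖y‖ ^ 2)
    {N : ℕ} {u : Fin N → Fin N → 𝕂} (hu : OrthoBasis u) (f : Fin N → X) :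
    ∑ k, ‖gft u f k‖ ^ 2 = ∑ n, ‖f n‖ ^ 2 := by
  letI : InnerProductSpace 𝕂 X := InnerProductSpace.ofNorm 𝕂 (fun x y => by
    have := hpar x y; nlinarith [this])
  have key : ∑ k, (inner 𝕂 (gft u f k) (gft u f k) : 𝕂) = ∑ n, inner 𝕂 (f n) (f n) := by
    have step : ∀ k, (inner 𝕂 (gft u f k) (gft u f k) : 𝕂)
        = ∑ n, ∑ m, u k n * ((starRingEnd 𝕂) (u k m) * inner 𝕂 (f n) (f m)) := by
      intro k
      rw [gft]
      rw [sum_inner]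
      refine Finset.sum_congr rfl fun n _ => ?_
      rw [inner_sum]
      refine Finset.sum_congr rfl fun m _ => ?_
      rw [inner_smul_left, inner_smul_right, RCLike.conj_conj]
    calc ∑ k, (inner 𝕂 (gft u f k) (gft u f k) : 𝕂)
        = ∑ k, ∑ n, ∑ m, u k n * ((starRingEnd 𝕂) (u k m) * inner 𝕂 (f n) (f m)) :=
          Finset.sum_congr rfl fun k _ => step k
      _ = ∑ n, ∑ m, ∑ k, u k n * ((starRingEnd 𝕂) (u k m) * inner 𝕂 (f n) (f m)) := by
          rw [Finset.sum_comm]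
          exact Finset.sum_congr rfl fun n _ => Finset.sum_comm
      _ = ∑ n, ∑ m, (∑ k, u k n * (starRingEnd 𝕂) (u k m)) * inner 𝕂 (f n) (f m) := by
          refine Finset.sum_congr rfl fun n _ => Finset.sum_congr rfl fun m _ => ?_
          rw [Finset.sum_mul]
          exact Finset.sum_congr rfl fun k _ => (mul_assoc _ _ _).symm
      _ = ∑ n, inner 𝕂 (f n) (f n) := by
          refine Finset.sum_congr rfl fun n _ => ?_
          rw [Finset.sum_congr rfl fun m _ => by rw [orthoBasis_cols hu n m]]
          simp
  calc ∑ k, ‖gft u f k‖ ^ 2 = RCLike.re (∑ k, (inner 𝕂 (gft u f k) (gft u f k) : 𝕂)) := by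
        rw [map_sum]; exact Finset.sum_congr rfl fun k _ => (inner_self_eq_norm_sq _).symm
    _ = RCLike.re (∑ n, (inner 𝕂 (f n) (f n) : 𝕂)) := by rw [key]
    _ = ∑ n, ‖f n‖ ^ 2 := by
        rw [map_sum]; exact Finset.sum_congr rfl fun n _ => inner_self_eq_norm_sq _

lemma sum_pair_ite {M : Type*} [AddCommMonoid M] {N : ℕ} {e0 e1 : Fin N} (h : e0 ≠ e1)
    (a b : M) :
    ∑ n : Fin N, (if n = e0 then a else if n = e1 then b else 0) = a + b := by
  have he : ∀ n : Fin N, (if n = e0 then a else if n = e1 then b else 0)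
      = (if n = e0 then a else 0) + (if n = e1 then b else 0) := by
    intro n; by_cases h0 : n = e0 <;> by_cases h1 : n = e1 <;> simp_all
  have h0 : (e0 : Fin N) ∈ Finset.univ := Finset.mem_univ _
  have h1 : N ≠ 0 := by rcases e0 with ⟨v, hv⟩; omega
  simp only [he, Finset.sum_add_distrib, Finset.sum_ite_eq', Finset.mem_univ, if_true]

noncomputable def hadB (𝕂 : Type*) [RCLike 𝕂] {N : ℕ} (e0 e1 : Fin N) :
    Fin N → Fin N → 𝕂 :=
  fun k n =>
    if k = e0 then
      (if n = e0 then (((Real.sqrt 2)⁻¹ : ℝ) : 𝕂)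
       else if n = e1 then (((Real.sqrt 2)⁻¹ : ℝ) : 𝕂) else 0)
    else if k = e1 then
      (if n = e0 then (((Real.sqrt 2)⁻¹ : ℝ) : 𝕂)
       else if n = e1 then -(((Real.sqrt 2)⁻¹ : ℝ) : 𝕂) else 0)
    else if n = k then 1 else 0

lemma hadB_ortho {𝕂 : Type*} [RCLike 𝕂] {N : ℕ} {e0 e1 : Fin N} (h01 : e0 ≠ e1) :
    OrthoBasis (hadB 𝕂 e0 e1) := by
  classical
  intro k l
  set c : 𝕂 := (((Real.sqrt 2)⁻¹ : ℝ) : 𝕂) with hc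
  have hconj : (starRingEnd 𝕂) c = c := RCLike.conj_ofReal _
  have hcc : c * c = ((2⁻¹ : ℝ) : 𝕂) := by
    rw [hc, ← RCLike.ofReal_mul, ← mul_inv, Real.mul_self_sqrt (by norm_num)]
  by_cases hk0 : k = e0
  · by_cases hl0 : l = e0
    · have hfun : ∀ n, (starRingEnd 𝕂) (hadB 𝕂 e0 e1 k n) * hadB 𝕂 e0 e1 l n
          = (if n = e0 then c * c else if n = e1 then c * c else 0) := by
        intro n; by_cases n0 : n = e0 <;> by_cases n1 : n = e1 <;>
          simp_all [hadB, hconj]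
      rw [Finset.sum_congr rfl fun n _ => hfun n, sum_pair_ite h01,
        if_pos (hk0.trans hl0.symm), hcc, ← RCLike.ofReal_add]
      norm_num
    · by_cases hl1 : l = e1
      · have hfun : ∀ n, (starRingEnd 𝕂) (hadB 𝕂 e0 e1 k n) * hadB 𝕂 e0 e1 l n
            = (if n = e0 then c * c else if n = e1 then c * (-c) else 0) := by
          intro n; by_cases n0 : n = e0 <;> by_cases n1 : n = e1 <;>
            simp_all [hadB, hconj]
        rw [Finset.sum_congr rfl fun n _ => hfun n, sum_pair_ite h01,
          if_neg (by rw [hk0, hl1]; exact h01)]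
        ring
      · have hfun : ∀ n, (starRingEnd 𝕂) (hadB 𝕂 e0 e1 k n) * hadB 𝕂 e0 e1 l n = 0 := by
          intro n; by_cases n0 : n = e0 <;> by_cases n1 : n = e1 <;>
            by_cases nl : n = l <;> simp_all [hadB, hconj]
        rw [Finset.sum_congr rfl fun n _ => hfun n,
          if_neg (show ¬k = l from fun h => hl0 (h.symm.trans hk0))]
        simp
  · by_cases hk1 : k = e1
    · by_cases hl0 : l = e0
      · have hfun : ∀ n, (starRingEnd 𝕂) (hadB 𝕂 e0 e1 k n) * hadB 𝕂 e0 e1 l n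
            = (if n = e0 then c * c else if n = e1 then (-c) * c else 0) := by
          intro n; by_cases n0 : n = e0 <;> by_cases n1 : n = e1 <;>
            simp_all [hadB, hconj]
        rw [Finset.sum_congr rfl fun n _ => hfun n, sum_pair_ite h01,
          if_neg (by rw [hk1, hl0]; exact fun h => h01 h.symm)]
        ring
      · by_cases hl1 : l = e1
        · have hfun : ∀ n, (starRingEnd 𝕂) (hadB 𝕂 e0 e1 k n) * hadB 𝕂 e0 e1 l n
              = (if n = e0 then c * c else if n = e1 then (-c) * (-c) else 0) := by
            intro n; by_cases n0 : n = e0 <;> by_cases n1 : n = e1 <;>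
              simp_all [hadB, hconj]
          rw [Finset.sum_congr rfl fun n _ => hfun n, sum_pair_ite h01,
            if_pos (hk1.trans hl1.symm), neg_mul_neg, hcc, ← RCLike.ofReal_add]
          norm_num
        · have hfun : ∀ n, (starRingEnd 𝕂) (hadB 𝕂 e0 e1 k n) * hadB 𝕂 e0 e1 l n = 0 := by
            intro n; by_cases n0 : n = e0 <;> by_cases n1 : n = e1 <;>
              by_cases nl : n = l <;> simp_all [hadB, hconj]
          rw [Finset.sum_congr rfl fun n _ => hfun n,
            if_neg (show ¬k = l from fun h => hl1 (h.symm.trans hk1))]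
          simp
    · -- k ∉ {e0, e1}
      by_cases hl0 : l = e0
      · have hfun : ∀ n, (starRingEnd 𝕂) (hadB 𝕂 e0 e1 k n) * hadB 𝕂 e0 e1 l n = 0 := by
          intro n; by_cases n0 : n = e0 <;> by_cases n1 : n = e1 <;>
            by_cases nk : n = k <;> simp_all [hadB, hconj]
        rw [Finset.sum_congr rfl fun n _ => hfun n,
          if_neg (show ¬k = l from fun h => hk0 (h.trans hl0))]
        simp
      · by_cases hl1 : l = e1
        · have hfun : ∀ n, (starRingEnd 𝕂) (hadB 𝕂 e0 e1 k n) * hadB 𝕂 e0 e1 l n = 0 := by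
            intro n; by_cases n0 : n = e0 <;> by_cases n1 : n = e1 <;>
              by_cases nk : n = k <;> simp_all [hadB, hconj]
          rw [Finset.sum_congr rfl fun n _ => hfun n,
            if_neg (show ¬k = l from fun h => hk1 (h.trans hl1))]
          simp
        · have hfun : ∀ n, (starRingEnd 𝕂) (hadB 𝕂 e0 e1 k n) * hadB 𝕂 e0 e1 l n
              = (if n = k then (if k = l then (1:𝕂) else 0) else 0) := by
            intro n; by_cases n0 : n = e0 <;> by_cases n1 : n = e1 <;>
              by_cases nk : n = k <;> by_cases nl : n = l <;> simp_all [hadB, hconj]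
          rw [Finset.sum_congr rfl fun n _ => hfun n, Finset.sum_ite_eq']
          simp


/-- for `N ≥ 2` and `X` nontrivial, `‖𝓕‖_{2→2} = 1` for every orthonormal
basis (i.e. `‖f̂‖_2 ≤ ‖f‖_2` for every signal, with the bound attained) iff the norm of
`X` satisfies the parallelogram law. -/
theorem gft_opnorm_one_iff_parallelogram {𝕂 : Type*} [RCLike 𝕂] {X : Type*}
    [NormedAddCommGroup X] [NormedSpace 𝕂 X] [CompleteSpace X] [Nontrivial X]
    {N : ℕ} (hN : 2 ≤ N) :
    ((∀ u : Fin N → Fin N → 𝕂, OrthoBasis u →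
        (∀ f : Fin N → X, gsNorm 2 (gft u f) ≤ gsNorm 2 f) ∧
        (∃ f : Fin N → X, f ≠ 0 ∧ gsNorm 2 (gft u f) = gsNorm 2 f)) ↔
      (∀ x y : X, ‖x + y‖ ^ 2 + ‖x - y‖ ^ 2 = 2 * ‖x‖ ^ 2 + 2 * ‖y‖ ^ 2)) := by
  classical
  constructor
  · intro H
    set e0 : Fin N := ⟨0, by omega⟩ with he0
    set e1 : Fin N := ⟨1, by omega⟩ with he1
    have h01 : e0 ≠ e1 := by simp [he0, he1, Fin.ext_iff]
    have h10 : e1 ≠ e0 := h01.symm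
    have hu : OrthoBasis (hadB 𝕂 e0 e1) := hadB_ortho h01
    obtain ⟨hle, -⟩ := H _ hu
    have hcsq : ∀ v : X, ‖((((Real.sqrt 2 : ℝ)) : 𝕂))⁻¹ • v‖ ^ 2 = 2⁻¹ * ‖v‖ ^ 2 := by
      intro v
      rw [norm_smul, norm_inv, RCLike.norm_ofReal, abs_of_nonneg (Real.sqrt_nonneg _),
        mul_pow, inv_pow, Real.sq_sqrt (by norm_num)]
    have main : ∀ x y : X, 2⁻¹ * ‖x + y‖ ^ 2 + 2⁻¹ * ‖x - y‖ ^ 2 ≤ ‖x‖ ^ 2 + ‖y‖ ^ 2 := by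
      intro x y
      have hgft : ∀ k, gft (hadB 𝕂 e0 e1)
          (fun n => if n = e0 then x else if n = e1 then y else 0) k =
          (if k = e0 then (((Real.sqrt 2)⁻¹ : ℝ) : 𝕂) • (x + y)
           else if k = e1 then (((Real.sqrt 2)⁻¹ : ℝ) : 𝕂) • (x - y) else 0) := by
        intro k
        have hfun : ∀ n, (starRingEnd 𝕂) (hadB 𝕂 e0 e1 k n) •
            (if n = e0 then x else if n = e1 then y else 0)
            = (if n = e0 then (starRingEnd 𝕂) (hadB 𝕂 e0 e1 k e0) • x
               else if n = e1 then (starRingEnd 𝕂) (hadB 𝕂 e0 e1 k e1) • y else 0) := by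
          intro n
          by_cases n0 : n = e0
          · subst n0; simp
          · by_cases n1 : n = e1
            · subst n1; simp [n0]
            · simp [n0, n1]
        show (∑ n, (starRingEnd 𝕂) (hadB 𝕂 e0 e1 k n) •
            (if n = e0 then x else if n = e1 then y else 0)) = _
        rw [Finset.sum_congr rfl fun n _ => hfun n, sum_pair_ite h01]
        by_cases hk0 : k = e0
        · subst hk0
          simp [hadB, h10, RCLike.conj_ofReal, smul_add]
        · by_cases hk1 : k = e1
          · subst hk1
            simp [hadB, h10, h01, hk0, RCLike.conj_ofReal, smul_sub, sub_eq_add_neg]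
          · have hek : ¬ e0 = k := fun h => hk0 h.symm
            have hek1 : ¬ e1 = k := fun h => hk1 h.symm
            simp [hadB, hk0, hk1, hek, hek1]
      have hS1 : ∑ k, ‖gft (hadB 𝕂 e0 e1)
          (fun n => if n = e0 then x else if n = e1 then y else 0) k‖ ^ 2
          = 2⁻¹ * ‖x + y‖ ^ 2 + 2⁻¹ * ‖x - y‖ ^ 2 := by
        have hterm : ∀ k, ‖gft (hadB 𝕂 e0 e1)
            (fun n => if n = e0 then x else if n = e1 then y else 0) k‖ ^ 2
            = (if k = e0 then 2⁻¹ * ‖x + y‖ ^ 2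
               else if k = e1 then 2⁻¹ * ‖x - y‖ ^ 2 else 0) := by
          intro k; rw [hgft k]
          by_cases k0 : k = e0
          · subst k0
            rw [if_pos rfl, if_pos rfl, RCLike.ofReal_inv, hcsq]
          · by_cases k1 : k = e1
            · subst k1
              rw [if_neg k0, if_pos rfl, if_neg k0, if_pos rfl, RCLike.ofReal_inv, hcsq]
            · rw [if_neg k0, if_neg k1, if_neg k0, if_neg k1]
              simp
        rw [Finset.sum_congr rfl fun k _ => hterm k, sum_pair_ite h01]
      have hS2 : ∑ n, ‖(if n = e0 then x else if n = e1 then y else (0:X))‖ ^ 2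
          = ‖x‖ ^ 2 + ‖y‖ ^ 2 := by
        have hterm : ∀ n, ‖(if n = e0 then x else if n = e1 then y else (0:X))‖ ^ 2
            = (if n = e0 then ‖x‖ ^ 2 else if n = e1 then ‖y‖ ^ 2 else 0) := by
          intro n
          by_cases n0 : n = e0
          · subst n0; simp
          · by_cases n1 : n = e1
            · subst n1; simp [n0]
            · simp [n0, n1]
        rw [Finset.sum_congr rfl fun n _ => hterm n, sum_pair_ite h01]
      have hineq := hle (fun n => if n = e0 then x else if n = e1 then y else 0)
      rw [gsNorm_two_eq, gsNorm_two_eq, Real.sqrt_le_sqrt_iff (by positivity)] at hineq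
      rw [hS1] at hineq
      rw [hS2] at hineq
      exact hineq
    intro x y
    have h1 := main x y
    have h2 := main (x + y) (x - y)
    have hxx : (x + y) + (x - y) = x + x := by abel
    have hyy : (x + y) - (x - y) = y + y := by abel
    rw [hxx, hyy] at h2
    have nx : ‖x + x‖ = 2 * ‖x‖ := by
      rw [← two_smul 𝕂 x, norm_smul, RCLike.norm_ofNat]
    have ny : ‖y + y‖ = 2 * ‖y‖ := by
      rw [← two_smul 𝕂 y, norm_smul, RCLike.norm_ofNat]
    rw [nx, ny] at h2
    nlinarith [h1, h2]
  · intro hpar u hu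
    have iso : ∀ f : Fin N → X, gsNorm 2 (gft u f) = gsNorm 2 f := by
      intro f; rw [gsNorm_two_eq, gsNorm_two_eq, sum_sq_gft hpar hu f]
    refine ⟨fun f => le_of_eq (iso f), ?_⟩
    obtain ⟨x0, hx0⟩ := exists_ne (0 : X)
    refine ⟨fun _ => x0, ?_, iso _⟩
    intro h
    exact hx0 (congrFun h ⟨0, by omega⟩)
end

section
/- For all scalar signals α, β : V → 𝕂 and every signal f : V → X, the graph convolution satisfies: (i) the convolution theorem 𝓕(α*f)(k) = α̂(k) • f̂(k) for all k ∈ V; (ii) commutativity of scalar convolution α*β = β*α; (iii) associativity (α*β)*f = α*(β*f). -/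
open Finset
open scoped ENNReal

private lemma gft_gconv {𝕂 : Type*} [RCLike 𝕂] {X : Type*} [NormedAddCommGroup X]
    [NormedSpace 𝕂 X] {N : ℕ}
    (u : Fin N → Fin N → 𝕂) (hU : OrthoBasis u) (α : Fin N → 𝕂) (f : Fin N → X)
    (k : Fin N) : gft u (gconv u α f) k = gft u α k • gft u f k := by
  show ∑ n, (starRingEnd 𝕂) (u k n) • ∑ l, u l n • (gft u α l • gft u f l) = _
  simp only [Finset.smul_sum]
  rw [Finset.sum_comm]
  have : ∀ l, ∑ n, (starRingEnd 𝕂) (u k n) • u l n • (gft u α l • gft u f l)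
      = (∑ n, (starRingEnd 𝕂) (u k n) * u l n) • (gft u α l • gft u f l) := by
    intro l
    rw [Finset.sum_smul]
    exact Finset.sum_congr rfl fun n _ => (smul_smul _ _ _)
  simp only [this, hU k]
  simp [gft]

/-- convolution theorem, commutativity of scalar convolution, and
associativity of convolution. -/
theorem gconv_basic_properties {𝕂 : Type*} [RCLike 𝕂] {X : Type*} [NormedAddCommGroup X]
    [NormedSpace 𝕂 X] [CompleteSpace X] {N : ℕ} (hN : 0 < N)
    (u : Fin N → Fin N → 𝕂) (hU : OrthoBasis u) :
    (∀ (α : Fin N → 𝕂) (f : Fin N → X) (k : Fin N),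
      gft u (gconv u α f) k = gft u α k • gft u f k) ∧
    (∀ α β : Fin N → 𝕂, gconv u α β = gconv u β α) ∧
    (∀ (α β : Fin N → 𝕂) (f : Fin N → X),
      gconv u (gconv u α β) f = gconv u α (gconv u β f)) := by
  refine ⟨gft_gconv u hU, ?_, ?_⟩
  · intro α β
    funext n
    refine Finset.sum_congr rfl fun k _ => ?_
    simp only [smul_eq_mul]
    ring
  · intro α β f
    funext n
    show ∑ k, u k n • (gft u (gconv u α β) k • gft u f k)
        = ∑ k, u k n • (gft u α k • gft u (gconv u β f) k)
    refine Finset.sum_congr rfl fun k _ => ?_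
    rw [gft_gconv u hU, gft_gconv u hU, smul_eq_mul, smul_smul, smul_smul, smul_smul, mul_assoc]
end

section
/- Fix m ∈ V and suppose X is nontrivial. Then the graph translation operator T_m : X^V → X^V is bijective if and only if u_k(m) ≠ 0 for all k ∈ {1,…,N}; moreover in this case its inverse is the linear operator g ↦ T_m^{-1}g given by T_m^{-1}g(n) = ∑_{k=1}^N (u_k(n)/conj(u_k(m))) • ĝ(k). Furthermore, T_m is injective if and only if T_m is surjective. -/
open Finset
open scoped ENNReal

open Matrix

section aux
variable {𝕂 : Type*} [RCLike 𝕂] {X : Type*} [NormedAddCommGroup X]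
    [NormedSpace 𝕂 X] {N : ℕ} {u : Fin N → Fin N → 𝕂}

lemma aux_col (hU : OrthoBasis u) (n n' : Fin N) :
    ∑ k, (starRingEnd 𝕂) (u k n) * u k n' = if n = n' then 1 else 0 := by
  have h1 : Matrix.of u * (Matrix.of u)ᴴ = 1 := by
    ext k l
    simp only [Matrix.mul_apply, Matrix.conjTranspose_apply, Matrix.of_apply,
      Matrix.one_apply, ← starRingEnd_apply]
    calc ∑ n, u k n * (starRingEnd 𝕂) (u l n)
        = ∑ n, (starRingEnd 𝕂) (u l n) * u k n := by simp [mul_comm]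
      _ = if l = k then 1 else 0 := hU l k
      _ = if k = l then 1 else 0 := by simp [eq_comm]
  have h2 := mul_eq_one_comm.mp h1
  have h3 : ((Matrix.of u)ᴴ * Matrix.of u) n n' = (1 : Matrix (Fin N) (Fin N) 𝕂) n n' := by
    rw [h2]
  simpa [Matrix.mul_apply, Matrix.conjTranspose_apply, Matrix.one_apply,
    ← starRingEnd_apply] using h3

lemma aux_synth (hU : OrthoBasis u) (f : Fin N → X) (n : Fin N) :
    ∑ k, u k n • gft u f k = f n := by
  simp only [gft, Finset.smul_sum, smul_smul]
  rw [Finset.sum_comm]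
  have : ∀ n' : Fin N, ∑ k, (u k n * (starRingEnd 𝕂) (u k n')) • f n'
      = (if n' = n then (1:𝕂) else 0) • f n' := by
    intro n'
    rw [← Finset.sum_smul]
    congr 1
    have hc := aux_col hU n n'
    calc ∑ k, u k n * (starRingEnd 𝕂) (u k n')
        = (starRingEnd 𝕂) (∑ k, (starRingEnd 𝕂) (u k n) * u k n') := by
          simp [map_sum, mul_comm]
      _ = (if n' = n then (1:𝕂) else 0) := by
          rw [hc]
          rcases eq_or_ne n n' with h|h
          · simp [h]
          · simp [h, h.symm]
  simp only [this]
  simp [Finset.sum_ite_eq]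

lemma aux_gft_gtrans (hU : OrthoBasis u) (m : Fin N) (f : Fin N → X) (l : Fin N) :
    gft u (gtrans u m f) l = (starRingEnd 𝕂) (u l m) • gft u f l := by
  conv_lhs => rw [gft]
  simp only [gtrans, Finset.smul_sum, smul_smul]
  rw [Finset.sum_comm]
  have : ∀ k : Fin N, ∑ n, ((starRingEnd 𝕂) (u l n) * (u k n * (starRingEnd 𝕂) (u k m))) • gft u f k
      = ((if l = k then (1:𝕂) else 0) * (starRingEnd 𝕂) (u k m)) • gft u f k := by
    intro k
    rw [← Finset.sum_smul]
    congr 1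
    simp only [← mul_assoc]
    rw [← Finset.sum_mul, hU l k]
  simp only [this]
  simp [Finset.sum_ite_eq]

lemma aux_gft_inv (hU : OrthoBasis u) (m : Fin N) (g : Fin N → X) (l : Fin N) :
    gft u (fun n => ∑ k, (u k n / (starRingEnd 𝕂) (u k m)) • gft u g k) l
      = ((starRingEnd 𝕂) (u l m))⁻¹ • gft u g l := by
  conv_lhs => rw [gft]
  simp only [div_eq_mul_inv, Finset.smul_sum, smul_smul]
  rw [Finset.sum_comm]
  have : ∀ k : Fin N, ∑ n, ((starRingEnd 𝕂) (u l n) * (u k n * ((starRingEnd 𝕂) (u k m))⁻¹)) • gft u g k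
      = ((if l = k then (1:𝕂) else 0) * ((starRingEnd 𝕂) (u k m))⁻¹) • gft u g k := by
    intro k
    rw [← Finset.sum_smul]
    congr 1
    simp only [← mul_assoc]
    rw [← Finset.sum_mul, hU l k]
  simp only [this]
  simp [Finset.sum_ite_eq]

end aux

section main
variable {𝕂 : Type*} [RCLike 𝕂] {X : Type*} [NormedAddCommGroup X]
    [NormedSpace 𝕂 X] {N : ℕ} {u : Fin N → Fin N → 𝕂}

lemma aux_gft_delta (hU : OrthoBasis u) (x : X) (k₀ k : Fin N) :
    gft u (fun n => u k₀ n • x) k = (if k = k₀ then (1:𝕂) else 0) • x := by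
  simp only [gft, smul_smul]
  rw [← Finset.sum_smul, hU k k₀]

lemma aux_bad [Nontrivial X] (hU : OrthoBasis u) (m : Fin N) {k₀ : Fin N} (hk : u k₀ m = 0) :
    ¬ Function.Injective (gtrans (X := X) u m) ∧
    ¬ Function.Surjective (gtrans (X := X) u m) := by
  obtain ⟨x, hx⟩ := exists_ne (0 : X)
  set f : Fin N → X := fun n => u k₀ n • x with hf
  have hgf : ∀ k, gft u f k = (if k = k₀ then (1:𝕂) else 0) • x :=
    aux_gft_delta hU x k₀
  have hTf : gtrans u m f = 0 := by
    funext n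
    have hck : (starRingEnd 𝕂) (u k₀ m) = 0 := by simp [hk]
    simp [gtrans, hgf, smul_ite, Finset.sum_ite_eq', hck]
  have hfne : f ≠ 0 := by
    intro h0
    have h1 := hU k₀ k₀
    simp only [if_pos rfl] at h1
    have : ∀ n, u k₀ n = 0 := by
      intro n
      have := congrFun h0 n
      simp only [hf, Pi.zero_apply, smul_eq_zero] at this
      tauto
    simp [this] at h1
  constructor
  · intro hinj
    have hT0 : gtrans (X := X) u m 0 = 0 := by
      funext n; simp [gtrans, gft]
    exact hfne (hinj (by rw [hTf, hT0]))
  · intro hsurj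
    obtain ⟨f', hf'⟩ := hsurj f
    have h1 : gft u (gtrans u m f') k₀ = 0 := by
      rw [aux_gft_gtrans hU]
      simp [hk]
    rw [hf'] at h1
    rw [hgf k₀] at h1
    simp at h1
    exact hx h1

lemma aux_good (hU : OrthoBasis u) (m : Fin N) (h : ∀ k, u k m ≠ 0) :
    (∀ g : Fin N → X,
        gtrans u m (fun n => ∑ k, (u k n / (starRingEnd 𝕂) (u k m)) • gft u g k) = g) ∧
      (∀ f : Fin N → X,
        (fun n => ∑ k, (u k n / (starRingEnd 𝕂) (u k m)) • gft u (gtrans u m f) k) = f) := by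
  have hc : ∀ k, (starRingEnd 𝕂) (u k m) ≠ 0 := fun k => by
    simpa using h k
  constructor
  · intro g
    funext n
    show ∑ k, (u k n * (starRingEnd 𝕂) (u k m)) •
        gft u (fun n => ∑ k, (u k n / (starRingEnd 𝕂) (u k m)) • gft u g k) k = g n
    calc ∑ k, (u k n * (starRingEnd 𝕂) (u k m)) •
          gft u (fun n => ∑ k, (u k n / (starRingEnd 𝕂) (u k m)) • gft u g k) k
        = ∑ k, (u k n * (starRingEnd 𝕂) (u k m)) •
            (((starRingEnd 𝕂) (u k m))⁻¹ • gft u g k) := by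
          simp only [aux_gft_inv hU]
      _ = ∑ k, u k n • gft u g k := by
          refine Finset.sum_congr rfl fun k _ => ?_
          rw [smul_smul, mul_assoc, mul_inv_cancel₀ (hc k), mul_one]
      _ = g n := aux_synth hU g n
  · intro f
    funext n
    calc ∑ k, (u k n / (starRingEnd 𝕂) (u k m)) • gft u (gtrans u m f) k
        = ∑ k, (u k n / (starRingEnd 𝕂) (u k m)) •
            ((starRingEnd 𝕂) (u k m) • gft u f k) := by
          simp only [aux_gft_gtrans hU]
      _ = ∑ k, u k n • gft u f k := by
          refine Finset.sum_congr rfl fun k _ => ?_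
          rw [smul_smul, div_mul_cancel₀ _ (hc k)]
      _ = f n := aux_synth hU f n

end main

/-- `T_m` is bijective iff `u k m ≠ 0` for all `k`; in that case the map
`g ↦ (n ↦ ∑ k, (u k n / conj (u k m)) • ĝ k)` is its inverse; moreover `T_m` is
injective iff it is surjective. -/
theorem gtrans_invertibility {𝕂 : Type*} [RCLike 𝕂] {X : Type*} [NormedAddCommGroup X]
    [NormedSpace 𝕂 X] [CompleteSpace X] [Nontrivial X] {N : ℕ} (hN : 0 < N)
    (u : Fin N → Fin N → 𝕂) (hU : OrthoBasis u) (m : Fin N) :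
    (Function.Bijective (gtrans (X := X) u m) ↔ ∀ k, u k m ≠ 0) ∧
    ((∀ k, u k m ≠ 0) →
      (∀ g : Fin N → X,
        gtrans u m (fun n => ∑ k, (u k n / (starRingEnd 𝕂) (u k m)) • gft u g k) = g) ∧
      (∀ f : Fin N → X,
        (fun n => ∑ k, (u k n / (starRingEnd 𝕂) (u k m)) • gft u (gtrans u m f) k) = f)) ∧
    (Function.Injective (gtrans (X := X) u m) ↔
      Function.Surjective (gtrans (X := X) u m)) := by
  have hgood : (∀ k, u k m ≠ 0) → Function.Bijective (gtrans (X := X) u m) := by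
    intro h
    obtain ⟨h1, h2⟩ := aux_good (X := X) hU m h
    refine Function.bijective_iff_has_inverse.mpr
      ⟨fun g n => ∑ k, (u k n / (starRingEnd 𝕂) (u k m)) • gft u g k, ?_, ?_⟩
    · intro f; exact h2 f
    · intro g; exact h1 g
  have hbad : ¬ (∀ k, u k m ≠ 0) →
      ¬ Function.Injective (gtrans (X := X) u m) ∧
      ¬ Function.Surjective (gtrans (X := X) u m) := by
    intro h
    push_neg at h
    obtain ⟨k₀, hk⟩ := h
    exact aux_bad hU m hk
  refine ⟨⟨fun hb => ?_, hgood⟩, aux_good hU m, ?_⟩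
  · by_contra h
    exact (hbad h).1 hb.1
  · constructor
    · intro hi
      by_contra hs
      rcases Classical.em (∀ k, u k m ≠ 0) with h|h
      · exact hs (hgood h).2
      · exact (hbad h).1 hi
    · intro hs
      rcases Classical.em (∀ k, u k m ≠ 0) with h|h
      · exact (hgood h).1
      · exact absurd hs (hbad h).2
end
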